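/- Fix an integer n ≥ 1 and p = (p₀,…,p_{n−1}) ∈ [0,1]^n. Then Σ_{Y ∈ Sₙ} ∏_{i=0}^{n−1} p_i^{f_i(Y)} (1−p_i)^{e_i(Y)} = 1 (with the convention 0⁰ = 1); in other words, the assignment Y ↦ ∏_{i=0}^{n−1} p_i^{f_i(Y)} (1−p_i)^{e_i(Y)} is a probability mass function on Sₙ, so it defines a probability distribution X(n,p) on Sₙ (the multi-parameter random simplicial complex model). -/

import Mathlib

open MeasureTheory Finset Filter


/-- A (sub)complex of the complete complex on the vertex type `V`:
a family of finite subsets closed under taking subsets and containing `∅`. -/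
def SComplex {V : Type*} [DecidableEq V] (Y : Finset (Finset V)) : Prop :=
  ∅ ∈ Y ∧ ∀ σ ∈ Y, ∀ τ ∈ σ.powerset, τ ∈ Y

instance {V : Type*} [DecidableEq V] :
    DecidablePred (fun Y : Finset (Finset V) => SComplex Y) :=
  fun Y => decidable_of_iff (∅ ∈ Y ∧ ∀ σ ∈ Y, ∀ τ ∈ σ.powerset, τ ∈ Y) Iff.rfl

/-- `scount Y m` = number of simplices of `Y` with `m` vertices (i.e. `(m-1)`-simplices);
`f_k(Y) = scount Y (k+1)` and `f_{-1}(Y) = scount Y 0`. -/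
def scount {V : Type*} (Y : Finset (Finset V)) (m : ℕ) : ℕ :=
  (Y.filter (fun σ => σ.card = m)).card

/-- Number of external `i`-simplices of `Y` in the complete complex on `Fin n`:
`i`-simplices `σ ∉ Y` all of whose strict subsets lie in `Y`. -/
def ecount {n : ℕ} (Y : Finset (Finset (Fin n))) (i : ℕ) : ℕ :=
  (Finset.univ.filter (fun σ : Finset (Fin n) =>
    σ.card = i + 1 ∧ σ ∉ Y ∧ ∀ τ ∈ σ.powerset, τ ≠ σ → τ ∈ Y)).card

/-- The weight `∏_{i=0}^{n-1} p_i^{f_i(Y)} (1-p_i)^{e_i(Y)}` of the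
multi-parameter random simplicial complex model. -/
noncomputable def mpWeight {n : ℕ} (p : Fin n → ℝ) (Y : Finset (Finset (Fin n))) : ℝ :=
  ∏ i : Fin n, p i ^ scount Y (i.1 + 1) * (1 - p i) ^ ecount Y i.1

/-- The probability of an event, as a real number. -/
noncomputable def prb {Ω : Type*} [MeasurableSpace Ω] (μ : Measure Ω) (A : Set Ω) : ℝ :=
  (μ A).toReal

/-- Conditional probability `P(A | B)`, as a real number. -/
noncomputable def condP {Ω : Type*} [MeasurableSpace Ω] (μ : Measure Ω) (A B : Set Ω) : ℝ :=
  prb μ (A ∩ B) / prb μ B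

/-- A random subcomplex is homogeneous if its distribution is invariant under
every permutation of the vertices. -/
def Homogeneous {n : ℕ} {Ω : Type*} [MeasurableSpace Ω] (μ : Measure Ω)
    (X : Ω → Finset (Finset (Fin n))) : Prop :=
  ∀ (g : Equiv.Perm (Fin n)) (Y : Finset (Finset (Fin n))),
    prb μ {ω | Finset.image (fun σ => σ.image (⇑g)) (X ω) = Y} = prb μ {ω | X ω = Y}

/-- Spatial independence of a random subcomplex. -/
def SpatInd {n : ℕ} {Ω : Type*} [MeasurableSpace Ω] (μ : Measure Ω)
    (X : Ω → Finset (Finset (Fin n))) : Prop :=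
  ∀ Y₁ Y₂ : Finset (Finset (Fin n)), SComplex Y₁ → SComplex Y₂ →
    prb μ {ω | Y₁ ∪ Y₂ ⊆ X ω} * prb μ {ω | Y₁ ∩ Y₂ ⊆ X ω} =
      prb μ {ω | Y₁ ⊆ X ω} * prb μ {ω | Y₂ ⊆ X ω}

/-- The `k`-dimensional standard simplex `{0, 1, …, k}` in `Fin n`
(for `k = -1` this is the empty simplex). -/
def stdSimp (n : ℕ) (k : ℤ) : Finset (Fin n) :=
  Finset.univ.filter (fun v => (v : ℤ) ≤ k)

/-- The `k`-dimensional simplex `{1, 2, …, k+1}` in `Fin n`,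
sharing `k` vertices with `stdSimp n k`. -/
def stdSimp' (n : ℕ) (k : ℕ) : Finset (Fin n) :=
  Finset.univ.filter (fun v => 1 ≤ (v : ℕ) ∧ (v : ℕ) ≤ k + 1)

/-- The parameter `q_k = P(τ ∈ X)` for a `k`-simplex `τ` (with `q_{-1} = 1`). -/
noncomputable def qpar {n : ℕ} {Ω : Type*} [MeasurableSpace Ω] (μ : Measure Ω)
    (X : Ω → Finset (Finset (Fin n))) (k : ℤ) : ℝ :=
  if k < 0 then 1 else prb μ {ω | stdSimp n k ∈ X ω}

/-- The parameter `r_k = P(σ ∈ X | τ ∈ X)` for a `(k+1)`-simplex `σ` containing the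
`k`-simplex `τ`, if `q_k > 0`, and `0` otherwise (with `r_{-1} = q_0`). -/
noncomputable def rpar {n : ℕ} {Ω : Type*} [MeasurableSpace Ω] (μ : Measure Ω)
    (X : Ω → Finset (Finset (Fin n))) (k : ℤ) : ℝ :=
  if 0 < qpar μ X k then
    condP μ {ω | stdSimp n (k + 1) ∈ X ω} {ω | stdSimp n k ∈ X ω}
  else 0

/-- The parameter `s_k = P(τ₁ ∪ τ₂ ∈ X | τ₁ ∈ X, τ₂ ∈ X)` for `k`-simplices `τ₁, τ₂`
sharing `k` vertices, if `P(τ₁ ∈ X, τ₂ ∈ X) > 0`, and `0` otherwise. -/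
noncomputable def spar {n : ℕ} {Ω : Type*} [MeasurableSpace Ω] (μ : Measure Ω)
    (X : Ω → Finset (Finset (Fin n))) (k : ℕ) : ℝ :=
  if 0 < prb μ ({ω | stdSimp n k ∈ X ω} ∩ {ω | stdSimp' n k ∈ X ω}) then
    condP μ {ω | stdSimp n (k + 1) ∈ X ω}
      ({ω | stdSimp n k ∈ X ω} ∩ {ω | stdSimp' n k ∈ X ω})
  else 0

section MPaux

variable {n : ℕ}

/-- Set of nonempty simplices of the complete complex on `Fin n`. -/
def mpE (n : ℕ) : Finset (Finset (Fin n)) := Finset.univ.filter (fun σ => σ ≠ ∅)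

/-- The complex generated by a set `ω` of "successful" simplices. -/
def genC (ω : Finset (Finset (Fin n))) : Finset (Finset (Fin n)) :=
  Finset.univ.filter (fun σ => ∀ τ ∈ σ.powerset, τ ≠ ∅ → τ ∈ ω)

/-- The external simplices of `Y`. -/
def extF (Y : Finset (Finset (Fin n))) : Finset (Finset (Fin n)) :=
  Finset.univ.filter (fun σ => σ ∉ Y ∧ ∀ τ ∈ σ.powerset, τ ≠ σ → τ ∈ Y)

/-- Per-simplex parameter. -/
noncomputable def pcc (q : Fin n → ℝ) (σ : Finset (Fin n)) : ℝ :=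
  if h : σ.card - 1 < n then q ⟨σ.card - 1, h⟩ else 0

lemma genC_sComplex (ω : Finset (Finset (Fin n))) : SComplex (genC ω) := by
  constructor
  · simp [genC]
  · intro σ hσ τ hτ
    simp only [genC, mem_filter, mem_univ, true_and] at hσ ⊢
    intro ρ hρ hρne
    exact hσ ρ (mem_powerset.2 ((mem_powerset.1 hρ).trans (mem_powerset.1 hτ))) hρne

lemma exists_min (Y : Finset (Finset (Fin n))) :
    ∀ σ : Finset (Fin n), σ ∉ Y →
      ∃ τ, τ ⊆ σ ∧ τ ∉ Y ∧ ∀ ρ ∈ τ.powerset, ρ ≠ τ → ρ ∈ Y := by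
  intro σ
  induction σ using Finset.strongInduction with
  | _ σ ih =>
    intro hσ
    by_cases h : ∀ ρ ∈ σ.powerset, ρ ≠ σ → ρ ∈ Y
    · exact ⟨σ, subset_rfl, hσ, h⟩
    · push_neg at h
      obtain ⟨ρ, hρσ, hne, hρ⟩ := h
      obtain ⟨τ, h1, h2, h3⟩ := ih ρ (ssubset_of_subset_of_ne (mem_powerset.1 hρσ) hne) hρ
      exact ⟨τ, h1.trans (mem_powerset.1 hρσ), h2, h3⟩

lemma gen_eq_iff (Y : Finset (Finset (Fin n))) (hY : SComplex Y)
    (ω : Finset (Finset (Fin n))) :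
    genC ω = Y ↔ (Y.erase ∅ ⊆ ω ∧ ∀ σ ∈ extF Y, σ ∉ ω) := by
  constructor
  · intro hgen
    have hA : Y.erase ∅ ⊆ ω := by
      intro σ hσ
      rw [mem_erase] at hσ
      rw [← hgen] at hσ
      simp only [genC, mem_filter, mem_univ, true_and] at hσ
      exact hσ.2 σ (mem_powerset.2 subset_rfl) hσ.1
    refine ⟨hA, fun σ hσ hσω => ?_⟩
    simp only [extF, mem_filter, mem_univ, true_and] at hσ
    apply hσ.1
    rw [← hgen]
    simp only [genC, mem_filter, mem_univ, true_and]
    intro τ hτ hτne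
    by_cases hts : τ = σ
    · exact hts ▸ hσω
    · exact hA (mem_erase.2 ⟨hτne, hσ.2 τ hτ hts⟩)
  · rintro ⟨hA, hB⟩
    ext σ
    simp only [genC, mem_filter, mem_univ, true_and]
    constructor
    · intro hσ
      by_contra hσY
      obtain ⟨τ, hτσ, hτY, hτmin⟩ := exists_min Y σ hσY
      have hτB : τ ∈ extF Y := by
        simp only [extF, mem_filter, mem_univ, true_and]
        exact ⟨hτY, hτmin⟩
      have hτne : τ ≠ ∅ := fun h => hτY (h ▸ hY.1)
      exact hB τ hτB (hσ τ (mem_powerset.2 hτσ) hτne)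
    · intro hσ τ hτ hτne
      exact hA (mem_erase.2 ⟨hτne, hY.2 σ hσ τ hτ⟩)

lemma erase_subset_mpE (Y : Finset (Finset (Fin n))) : Y.erase ∅ ⊆ mpE n := by
  intro σ hσ
  simp only [mpE, mem_filter, mem_univ, true_and]
  exact (mem_erase.1 hσ).1

lemma extF_subset_mpE (Y : Finset (Finset (Fin n))) (hY : SComplex Y) :
    extF Y ⊆ mpE n := by
  intro σ hσ
  simp only [extF, mem_filter, mem_univ, true_and] at hσ
  simp only [mpE, mem_filter, mem_univ, true_and]
  exact fun h => hσ.1 (h ▸ hY.1)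

lemma disjoint_erase_extF (Y : Finset (Finset (Fin n))) :
    Disjoint (Y.erase ∅) (extF Y) := by
  rw [Finset.disjoint_left]
  intro σ hσ hσ'
  simp only [extF, mem_filter, mem_univ, true_and] at hσ'
  exact hσ'.1 (mem_of_mem_erase hσ)

/-- Grouping a product over simplices by cardinality. -/
lemma prod_pcc (hn : 0 < n) (q : Fin n → ℝ) (S : Finset (Finset (Fin n)))
    (hS : ∀ σ ∈ S, σ ≠ ∅) :
    ∏ σ ∈ S, pcc q σ
      = ∏ i : Fin n, (q i) ^ (S.filter (fun σ => σ.card = i.1 + 1)).card := by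
  have hcard : ∀ σ ∈ S, 1 ≤ σ.card ∧ σ.card ≤ n := by
    intro σ hσ
    refine ⟨Finset.card_pos.2 (Finset.nonempty_iff_ne_empty.2 (hS σ hσ)), ?_⟩
    simpa using Finset.card_le_univ σ
  have key := Finset.prod_fiberwise_of_maps_to (g := fun σ : Finset (Fin n) =>
      if h : σ.card - 1 < n then (⟨σ.card - 1, h⟩ : Fin n) else ⟨0, hn⟩)
      (f := pcc q) (t := Finset.univ) (s := S) (fun x _ => mem_univ _)
  rw [← key]
  refine Finset.prod_congr rfl fun i _ => ?_
  have hfil : S.filter (fun σ => (if h : σ.card - 1 < n then (⟨σ.card - 1, h⟩ : Fin n)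
      else ⟨0, hn⟩) = i) = S.filter (fun σ => σ.card = i.1 + 1) := by
    apply Finset.filter_congr
    intro σ hσ
    obtain ⟨h1, h2⟩ := hcard σ hσ
    have hlt : σ.card - 1 < n := by omega
    rw [dif_pos hlt]
    simp only [Fin.ext_iff, Fin.val_mk]
    omega
  rw [hfil]
  rw [Finset.prod_congr rfl (fun σ hσ => ?_), Finset.prod_const]
  rw [mem_filter] at hσ
  obtain ⟨h1, h2⟩ := hcard σ hσ.1
  have hlt : σ.card - 1 < n := by omega
  have hi : (⟨σ.card - 1, hlt⟩ : Fin n) = i := by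
    rw [Fin.ext_iff]
    simp only [Fin.val_mk]
    omega
  simp only [pcc, dif_pos hlt, hi]

lemma fiber_sum (hn : 0 < n) (p : Fin n → ℝ) (Y : Finset (Finset (Fin n)))
    (hY : SComplex Y) :
    ∑ ω ∈ (mpE n).powerset.filter (fun ω => genC ω = Y),
        (∏ σ ∈ ω, pcc p σ) * ∏ σ ∈ mpE n \ ω, (1 - pcc p σ)
      = mpWeight p Y := by
  set A := Y.erase ∅ with hAdef
  set B := extF Y with hBdef
  set F := mpE n \ (A ∪ B) with hFdef
  have hAE : A ⊆ mpE n := erase_subset_mpE Y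
  have hBE : B ⊆ mpE n := extF_subset_mpE Y hY
  have hAB : Disjoint A B := disjoint_erase_extF Y
  have hFA : Disjoint F A := by
    refine Finset.disjoint_left.2 fun x hx hx' => ?_
    rw [hFdef, Finset.mem_sdiff] at hx
    exact hx.2 (mem_union_left _ hx')
  have hFB : Disjoint F B := by
    refine Finset.disjoint_left.2 fun x hx hx' => ?_
    rw [hFdef, Finset.mem_sdiff] at hx
    exact hx.2 (mem_union_right _ hx')
  -- the fiber is the image of F.powerset under (A ∪ ·)
  have hfib : (mpE n).powerset.filter (fun ω => genC ω = Y)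
      = F.powerset.image (fun s => A ∪ s) := by
    ext ω
    simp only [mem_filter, mem_powerset, mem_image, gen_eq_iff Y hY]
    constructor
    · rintro ⟨hωE, hAω, hBω⟩
      refine ⟨ω \ A, ?_, Finset.union_sdiff_of_subset hAω⟩
      intro x hx
      rw [Finset.mem_sdiff] at hx
      rw [hFdef, Finset.mem_sdiff, mem_union]
      exact ⟨hωE hx.1, fun h => h.elim hx.2 (fun hB' => hBω x hB' hx.1)⟩
    · rintro ⟨s, hsF, rfl⟩
      refine ⟨Finset.union_subset hAE (hsF.trans Finset.sdiff_subset),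
        subset_union_left, ?_⟩
      intro σ hσ hσω
      rcases mem_union.1 hσω with h | h
      · exact Finset.disjoint_left.1 hAB h hσ
      · exact Finset.disjoint_left.1 hFB (hsF h) hσ
  have hinj : ∀ s ∈ F.powerset, ∀ t ∈ F.powerset,
      A ∪ s = A ∪ t → s = t := by
    intro s hs t ht hst
    rw [mem_powerset] at hs ht
    have h1 : Disjoint A s := (hFA.mono_left hs).symm
    have h2 : Disjoint A t := (hFA.mono_left ht).symm
    calc s = (A ∪ s) \ A := (Finset.union_sdiff_cancel_left h1).symm
    _ = (A ∪ t) \ A := by rw [hst]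
    _ = t := Finset.union_sdiff_cancel_left h2
  rw [hfib, Finset.sum_image hinj]
  have hterm : ∀ s ∈ F.powerset,
      (∏ σ ∈ A ∪ s, pcc p σ) * ∏ σ ∈ mpE n \ (A ∪ s), (1 - pcc p σ)
        = ((∏ σ ∈ A, pcc p σ) * ∏ σ ∈ B, (1 - pcc p σ))
          * ((∏ σ ∈ s, pcc p σ) * ∏ σ ∈ F \ s, (1 - pcc p σ)) := by
    intro s hs
    rw [mem_powerset] at hs
    have hAs : Disjoint A s := (hFA.mono_left hs).symm
    have hsdiff : mpE n \ (A ∪ s) = B ∪ (F \ s) := by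
      ext x
      simp only [Finset.mem_sdiff, mem_union]
      constructor
      · rintro ⟨hxE, hx⟩
        push_neg at hx
        by_cases hxB : x ∈ B
        · exact Or.inl hxB
        · refine Or.inr ⟨?_, hx.2⟩
          rw [hFdef, Finset.mem_sdiff, mem_union]
          exact ⟨hxE, fun h => h.elim hx.1 hxB⟩
      · rintro (hxB | ⟨hxF, hxs⟩)
        · refine ⟨hBE hxB, ?_⟩
          push_neg
          exact ⟨Finset.disjoint_right.1 hAB hxB,
            fun h => Finset.disjoint_right.1 hFB hxB (hs h)⟩
        · rw [hFdef, Finset.mem_sdiff, mem_union] at hxF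
          push_neg at hxF
          exact ⟨hxF.1, by push_neg; exact ⟨hxF.2.1, hxs⟩⟩
    have hBFs : Disjoint B (F \ s) :=
      (hFB.mono_left Finset.sdiff_subset).symm
    rw [Finset.prod_union hAs, hsdiff, Finset.prod_union hBFs]
    ring
  rw [Finset.sum_congr rfl hterm, ← Finset.mul_sum]
  have hfree : ∑ s ∈ F.powerset, (∏ σ ∈ s, pcc p σ) * ∏ σ ∈ F \ s, (1 - pcc p σ)
      = 1 := by
    rw [← Finset.prod_add]
    simp
  rw [hfree, mul_one]
  -- now identify the constant with mpWeight
  have hScard : ∀ i : Fin n,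
      (A.filter (fun σ => σ.card = i.1 + 1)).card = scount Y (i.1 + 1) := by
    intro i
    have : A.filter (fun σ => σ.card = i.1 + 1)
        = Y.filter (fun σ => σ.card = i.1 + 1) := by
      ext σ
      simp only [hAdef, mem_filter, mem_erase]
      constructor
      · rintro ⟨⟨_, h⟩, hc⟩; exact ⟨h, hc⟩
      · rintro ⟨h, hc⟩
        refine ⟨⟨?_, h⟩, hc⟩
        intro he
        rw [he] at hc
        simp at hc
    rw [this]; rfl
  have hEcard : ∀ i : Fin n,
      (B.filter (fun σ => σ.card = i.1 + 1)).card = ecount Y i.1 := by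
    intro i
    have : B.filter (fun σ => σ.card = i.1 + 1)
        = Finset.univ.filter (fun σ : Finset (Fin n) =>
            σ.card = i.1 + 1 ∧ σ ∉ Y ∧ ∀ τ ∈ σ.powerset, τ ≠ σ → τ ∈ Y) := by
      ext σ
      simp only [hBdef, extF, mem_filter, mem_univ, true_and]
      tauto
    rw [this]; rfl
  have hBne : ∀ σ ∈ B, σ ≠ ∅ := by
    intro σ hσ
    have := hBE hσ
    simpa [mpE] using this
  have hAne : ∀ σ ∈ A, σ ≠ ∅ := by
    intro σ hσ
    exact (mem_erase.1 hσ).1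
  have h1pc : ∀ σ ∈ B, (1 - pcc p σ) = pcc (fun i => 1 - p i) σ := by
    intro σ hσ
    have hcard : σ.card ≤ n := by simpa using Finset.card_le_univ σ
    have hpos : 1 ≤ σ.card := Finset.card_pos.2 (Finset.nonempty_iff_ne_empty.2 (hBne σ hσ))
    have hlt : σ.card - 1 < n := by omega
    simp [pcc, dif_pos hlt]
  rw [Finset.prod_congr rfl h1pc, prod_pcc hn p A hAne,
    prod_pcc hn (fun i => 1 - p i) B hBne, ← Finset.prod_mul_distrib]
  unfold mpWeight
  refine Finset.prod_congr rfl fun i _ => ?_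
  rw [hScard i, hEcard i]

end MPaux

/-- the multi-parameter weights form a probability mass function on `Sₙ`. -/
theorem multiParam_weights_sum_to_one (n : ℕ) (hn : 1 ≤ n) (p : Fin n → ℝ)
    (hp : ∀ i, p i ∈ Set.Icc (0 : ℝ) 1) :
    ∑ Y ∈ Finset.univ.filter (fun Y : Finset (Finset (Fin n)) => SComplex Y),
      mpWeight p Y = 1 := by
  have hn0 : 0 < n := hn
  calc ∑ Y ∈ Finset.univ.filter (fun Y : Finset (Finset (Fin n)) => SComplex Y),
        mpWeight p Y
      = ∑ Y ∈ Finset.univ.filter (fun Y : Finset (Finset (Fin n)) => SComplex Y),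
          ∑ ω ∈ (mpE n).powerset.filter (fun ω => genC ω = Y),
            (∏ σ ∈ ω, pcc p σ) * ∏ σ ∈ mpE n \ ω, (1 - pcc p σ) :=
        Finset.sum_congr rfl fun Y hY =>
          (fiber_sum hn0 p Y (Finset.mem_filter.1 hY).2).symm
    _ = ∑ ω ∈ (mpE n).powerset,
          (∏ σ ∈ ω, pcc p σ) * ∏ σ ∈ mpE n \ ω, (1 - pcc p σ) :=
        Finset.sum_fiberwise_of_maps_to
          (fun ω _ => Finset.mem_filter.2 ⟨Finset.mem_univ _, genC_sComplex ω⟩) _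
    _ = ∏ σ ∈ mpE n, (pcc p σ + (1 - pcc p σ)) := (Finset.prod_add _ _ _).symm
    _ = 1 := by simp
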